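/- Let e be an empirical model on a continuous-variable measurement scenario and let e^bin be the discrete-variable empirical model obtained by pushing e forward along a family of measurable maps t_x : O_x → O'_x with each O'_x finite. Then NCF(e) ≤ NCF(e^bin), equivalently CF(e^bin) ≤ CF(e). -/
import Mathlib


open MeasureTheory
open scoped ENNReal

/-- The projection from the global outcome space onto the outcomes of a context `C`. -/
def proj {X : Type*} {O : X → Type*} (C : Set X) (g : ∀ x, O x) : ∀ x : C, O x :=
  fun x => g x

/-- The noncontextual fraction. -/
noncomputable def NCF {G : Type*} [MeasurableSpace G] {I : Type*} (M : Finset I)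
    {Gc : I → Type*} [∀ i, MeasurableSpace (Gc i)] (π : ∀ i, G → Gc i)
    (e : ∀ i, Measure (Gc i)) : ℝ≥0∞ :=
  sSup { r | ∃ μ : Measure G, (∀ i ∈ M, μ.map (π i) ≤ e i) ∧ r = μ Set.univ }

/-- binning (pushing forward along measurable maps `t x : O x → O' x`
with each `O' x` finite) does not decrease the noncontextual fraction:
`NCF e ≤ NCF e^bin`, equivalently `CF e^bin ≤ CF e`. -/
theorem ncf_le_ncf_binning {X : Type*} [Fintype X] {O O' : X → Type*}
    [∀ x, MeasurableSpace (O x)] [∀ x, MeasurableSpace (O' x)] [∀ x, Fintype (O' x)]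
    (M : Finset (Set X))
    (e : ∀ C : Set X, Measure (∀ x : C, O x))
    (he : ∀ C ∈ M, IsProbabilityMeasure (e C))
    (t : ∀ x, O x → O' x) (ht : ∀ x, Measurable (t x)) :
    NCF M (fun C : Set X => proj C (O := O)) e ≤
      NCF M (fun C : Set X => proj C (O := O'))
        (fun C => (e C).map (fun g (x : C) => t x (g x))) ∧
    1 - NCF M (fun C : Set X => proj C (O := O'))
        (fun C => (e C).map (fun g (x : C) => t x (g x))) ≤
      1 - NCF M (fun C : Set X => proj C (O := O)) e := by
  have hT : Measurable (fun (g : ∀ x, O x) (x : X) => t x (g x)) :=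
    measurable_pi_lambda _ fun x => (ht x).comp (measurable_pi_apply x)
  have hTc : ∀ C : Set X, Measurable (fun (g : ∀ x : C, O x) (x : C) => t x (g x)) :=
    fun C => measurable_pi_lambda _ fun x => (ht x).comp (measurable_pi_apply x)
  have hprojO : ∀ C : Set X, Measurable (proj C (O := O)) :=
    fun C => measurable_pi_lambda _ fun x => measurable_pi_apply (x : X)
  have hprojO' : ∀ C : Set X, Measurable (proj C (O := O')) :=
    fun C => measurable_pi_lambda _ fun x => measurable_pi_apply (x : X)
  have main : NCF M (fun C : Set X => proj C (O := O)) e ≤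
      NCF M (fun C : Set X => proj C (O := O'))
        (fun C => (e C).map (fun g (x : C) => t x (g x))) := by
    apply sSup_le_sSup
    rintro r ⟨μ, hμ, rfl⟩
    refine ⟨μ.map (fun g x => t x (g x)), ?_, ?_⟩
    · intro C hC
      have h1 : (μ.map (fun g x => t x (g x))).map (proj C (O := O'))
          = (μ.map (proj C (O := O))).map (fun g (x : C) => t x (g x)) := by
        rw [Measure.map_map (hprojO' C) hT, Measure.map_map (hTc C) (hprojO C)]
        rfl
      rw [h1]
      exact Measure.map_mono (hμ C hC) (hTc C)
    · rw [Measure.map_apply hT MeasurableSet.univ, Set.preimage_univ]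
  exact ⟨main, tsub_le_tsub_left main 1⟩
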